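/- For any R ≥ r > 0, the volume of the solid torus of tube radius r around a circle of radius R in ℝ³ equals 2π²r²R. -/

import Mathlib

open MeasureTheory Real

/-- The circle of radius `R` in the `z = 0` plane of `ℝ³`, centered at the origin. -/
def circle3 (R : ℝ) : Set (EuclideanSpace ℝ (Fin 3)) :=
  {p | (p 0) ^ 2 + (p 1) ^ 2 = R ^ 2 ∧ p 2 = 0}

section Aux

noncomputable def pt3 (a b c : ℝ) : EuclideanSpace ℝ (Fin 3) :=
  (WithLp.equiv 2 (Fin 3 → ℝ)).symm ![a, b, c]

@[simp] lemma pt3_0 (a b c : ℝ) : pt3 a b c 0 = a := rfl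
@[simp] lemma pt3_1 (a b c : ℝ) : pt3 a b c 1 = b := rfl
@[simp] lemma pt3_2 (a b c : ℝ) : pt3 a b c 2 = c := rfl

lemma cs2 {a b x y : ℝ} :
    a * x + b * y ≤ Real.sqrt (a^2 + b^2) * Real.sqrt (x^2 + y^2) := by
  have h1 : 0 ≤ Real.sqrt (a^2+b^2) := Real.sqrt_nonneg _
  have h2 : 0 ≤ Real.sqrt (x^2+y^2) := Real.sqrt_nonneg _
  have e1 : Real.sqrt (a^2+b^2) ^ 2 = a^2+b^2 := Real.sq_sqrt (by positivity)
  have e2 : Real.sqrt (x^2+y^2) ^ 2 = x^2+y^2 := Real.sq_sqrt (by positivity)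
  nlinarith [sq_nonneg (a*y - b*x), mul_nonneg h1 h2,
    sq_nonneg (a*x + b*y - Real.sqrt (a^2+b^2) * Real.sqrt (x^2+y^2))]

/-- Distance to the circle of radius `R` in the plane `z = 0`. -/
lemma dist_circle3 (R : ℝ) (hR : 0 < R) (p : EuclideanSpace ℝ (Fin 3)) :
    Metric.infDist p (circle3 R) =
      Real.sqrt ((Real.sqrt ((p 0)^2 + (p 1)^2) - R)^2 + (p 2)^2) := by
  have hdist : ∀ q : EuclideanSpace ℝ (Fin 3), dist p q =
      Real.sqrt ((p 0 - q 0)^2 + (p 1 - q 1)^2 + (p 2 - q 2)^2) := by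
    intro q
    rw [EuclideanSpace.dist_eq]
    congr 1
    simp [Fin.sum_univ_three, Real.dist_eq, sq_abs]
  set x := p 0
  set y := p 1
  set z := p 2
  set ρ := Real.sqrt (x^2 + y^2) with hρdef
  have hρ0 : 0 ≤ ρ := Real.sqrt_nonneg _
  have hρsq : ρ^2 = x^2 + y^2 := Real.sq_sqrt (by positivity)
  obtain ⟨q, hq, hdq⟩ : ∃ q ∈ circle3 R, dist p q = Real.sqrt ((ρ - R)^2 + z^2) := by
    rcases eq_or_lt_of_le hρ0 with h0 | h0
    · refine ⟨pt3 R 0 0, ⟨by simp, rfl⟩, ?_⟩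
      have hx : x = 0 := by nlinarith
      have hy : y = 0 := by nlinarith
      rw [hdist]
      simp [hx, hy, ← h0]
    · refine ⟨pt3 (R/ρ * x) (R/ρ * y) 0, ⟨?_, rfl⟩, ?_⟩
      · simp only [pt3_0, pt3_1]
        field_simp
        nlinarith
      · rw [hdist]
        simp only [pt3_0, pt3_1, pt3_2, sub_zero]
        congr 1
        have hρne : ρ ≠ 0 := ne_of_gt h0
        field_simp
        nlinarith
  refine le_antisymm (hdq ▸ Metric.infDist_le_dist_of_mem hq) ?_
  rw [← not_lt, Metric.infDist_lt_iff ⟨q, hq⟩]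
  push_neg
  rintro q' ⟨hq1, hq2⟩
  rw [hdist q', hq2, sub_zero]
  apply Real.sqrt_le_sqrt
  have hcs : q' 0 * x + q' 1 * y ≤ R * ρ := by
    have := cs2 (a := q' 0) (b := q' 1) (x := x) (y := y)
    rwa [hq1, Real.sqrt_sq hR.le] at this
  nlinarith

/-- The area of the slice of the solid torus at height `z`, for `z² ≤ r²`. -/
lemma annulus_vol (r R : ℝ) (hr : 0 < r) (hrR : r ≤ R) (z : ℝ) (hz : z^2 ≤ r^2) :
    volume {g : Fin 2 → ℝ | (Real.sqrt ((g 0)^2 + (g 1)^2) - R)^2 + z^2 ≤ r^2}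
      = ENNReal.ofReal (4 * π * R * Real.sqrt (r^2 - z^2)) := by
  set s := Real.sqrt (r^2 - z^2) with hsdef
  have hs0 : 0 ≤ s := Real.sqrt_nonneg _
  have hssq : s^2 = r^2 - z^2 := Real.sq_sqrt (by linarith)
  have hsr : s ≤ r := by
    rw [hsdef]
    calc Real.sqrt (r^2 - z^2) ≤ Real.sqrt (r^2) := Real.sqrt_le_sqrt (by nlinarith [sq_nonneg z])
    _ = r := Real.sqrt_sq hr.le
  have hRs : 0 ≤ R - s := by linarith
  have hset : {g : Fin 2 → ℝ | (Real.sqrt ((g 0)^2 + (g 1)^2) - R)^2 + z^2 ≤ r^2}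
      = {g : Fin 2 → ℝ | Real.sqrt ((g 0)^2 + (g 1)^2) ≤ R + s}
        \ {g : Fin 2 → ℝ | Real.sqrt ((g 0)^2 + (g 1)^2) < R - s} := by
    ext g
    set ρ := Real.sqrt ((g 0)^2 + (g 1)^2)
    simp only [Set.mem_setOf_eq, Set.mem_diff, not_lt]
    constructor
    · intro h
      have h2 : (ρ - R)^2 ≤ s^2 := by linarith
      have h3 : |ρ - R| ≤ s := by
        have := Real.sqrt_le_sqrt h2
        rwa [Real.sqrt_sq_eq_abs, Real.sqrt_sq hs0] at this
      rw [abs_le] at h3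
      constructor <;> linarith [h3.1, h3.2]
    · rintro ⟨h1, h2⟩
      nlinarith
  rw [hset]
  have e := EuclideanSpace.volume_preserving_symm_measurableEquiv_toLp (Fin 2)
  have hcoe : ∀ (q : EuclideanSpace ℝ (Fin 2)),
      ‖q‖ = Real.sqrt ((q 0)^2 + (q 1)^2) := by
    intro q
    rw [EuclideanSpace.norm_eq]
    congr 1
    simp [Fin.sum_univ_two, sq_abs]
  have hmB : MeasurableSet {g : Fin 2 → ℝ | Real.sqrt ((g 0)^2 + (g 1)^2) ≤ R + s} := by
    apply measurableSet_le _ measurable_const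
    exact (((measurable_pi_apply 0).pow_const 2).add
      ((measurable_pi_apply 1).pow_const 2)).sqrt
  have hmC : MeasurableSet {g : Fin 2 → ℝ | Real.sqrt ((g 0)^2 + (g 1)^2) < R - s} := by
    apply measurableSet_lt _ measurable_const
    exact (((measurable_pi_apply 0).pow_const 2).add
      ((measurable_pi_apply 1).pow_const 2)).sqrt
  have hvB : volume {g : Fin 2 → ℝ | Real.sqrt ((g 0)^2 + (g 1)^2) ≤ R + s}
      = ENNReal.ofReal ((R + s)^2 * π) := by
    rw [← e.measure_preimage hmB.nullMeasurableSet]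
    have : (MeasurableEquiv.toLp 2 (Fin 2 → ℝ)).symm ⁻¹'
        {g : Fin 2 → ℝ | Real.sqrt ((g 0)^2 + (g 1)^2) ≤ R + s}
        = Metric.closedBall (0 : EuclideanSpace ℝ (Fin 2)) (R + s) := by
      ext q
      simp only [Set.mem_preimage, Set.mem_setOf_eq, Metric.mem_closedBall, dist_zero_right,
        hcoe q]
      rfl
    rw [this, EuclideanSpace.volume_closedBall]
    simp only [Fintype.card_fin]
    rw [show ((2:ℕ):ℝ)/2 + 1 = 2 by norm_num, Real.Gamma_two,
      Real.sq_sqrt pi_nonneg]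
    rw [← ENNReal.ofReal_pow (by linarith), ← ENNReal.ofReal_mul (by positivity)]
    norm_num
  have hvC : volume {g : Fin 2 → ℝ | Real.sqrt ((g 0)^2 + (g 1)^2) < R - s}
      = ENNReal.ofReal ((R - s)^2 * π) := by
    rw [← e.measure_preimage hmC.nullMeasurableSet]
    have : (MeasurableEquiv.toLp 2 (Fin 2 → ℝ)).symm ⁻¹'
        {g : Fin 2 → ℝ | Real.sqrt ((g 0)^2 + (g 1)^2) < R - s}
        = Metric.ball (0 : EuclideanSpace ℝ (Fin 2)) (R - s) := by
      ext q
      simp only [Set.mem_preimage, Set.mem_setOf_eq, Metric.mem_ball, dist_zero_right, hcoe q]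
      rfl
    rw [this, EuclideanSpace.volume_ball]
    simp only [Fintype.card_fin]
    rw [show ((2:ℕ):ℝ)/2 + 1 = 2 by norm_num, Real.Gamma_two,
      Real.sq_sqrt pi_nonneg]
    rw [← ENNReal.ofReal_pow (by linarith), ← ENNReal.ofReal_mul (by positivity)]
    norm_num
  have hsub : {g : Fin 2 → ℝ | Real.sqrt ((g 0)^2 + (g 1)^2) < R - s}
      ⊆ {g : Fin 2 → ℝ | Real.sqrt ((g 0)^2 + (g 1)^2) ≤ R + s} := by
    intro g hg
    simp only [Set.mem_setOf_eq] at hg ⊢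
    linarith
  rw [measure_diff hsub hmC.nullMeasurableSet (by rw [hvC]; exact ENNReal.ofReal_ne_top)]
  rw [hvB, hvC, ← ENNReal.ofReal_sub _ (by positivity)]
  congr 1
  ring

/-- The `z`-integral giving the total volume. -/
lemma zint (r R : ℝ) (hr : 0 < r) (hR : 0 ≤ R) :
    (∫⁻ z : ℝ, Set.indicator (Set.Icc (-r) r)
        (fun z => ENNReal.ofReal (4 * π * R * Real.sqrt (r^2 - z^2))) z)
      = ENNReal.ofReal (2 * π ^ 2 * r ^ 2 * R) := by
  rw [lintegral_indicator measurableSet_Icc]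
  have hcont : Continuous fun z : ℝ => 4 * π * R * Real.sqrt (r^2 - z^2) :=
    continuous_const.mul ((continuous_const.sub (continuous_pow 2)).sqrt)
  have hint : IntegrableOn (fun z : ℝ => 4 * π * R * Real.sqrt (r^2 - z^2))
      (Set.Icc (-r) r) := hcont.integrableOn_Icc
  rw [← ofReal_integral_eq_lintegral_ofReal hint
      (Filter.Eventually.of_forall fun z => by positivity)]
  congr 1
  rw [MeasureTheory.integral_Icc_eq_integral_Ioc,
    ← intervalIntegral.integral_of_le (by linarith : -r ≤ r)]
  rw [intervalIntegral.integral_const_mul]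
  have hsub : ∀ z : ℝ, Real.sqrt (r^2 - z^2) = r * Real.sqrt (1 - (z/r)^2) := by
    intro z
    rw [show r^2 - z^2 = r^2 * (1 - (z/r)^2) by field_simp,
      Real.sqrt_mul (sq_nonneg r), Real.sqrt_sq hr.le]
  simp_rw [hsub]
  rw [intervalIntegral.integral_const_mul]
  have := intervalIntegral.integral_comp_div (a := -r) (b := r)
    (fun t : ℝ => Real.sqrt (1 - t^2)) (ne_of_gt hr)
  rw [this, neg_div, div_self (ne_of_gt hr)]
  rw [integral_sqrt_one_sub_sq]
  simp only [smul_eq_mul]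
  ring

end Aux

/-- Pappus/Archimedes: for `R ≥ r > 0`, the volume of the solid torus of tube radius
`r` around a circle of radius `R` in `ℝ³` equals `2π²r²R`. -/
theorem volume_solid_torus (r R : ℝ) (hr : 0 < r) (hrR : r ≤ R) :
    volume {p : EuclideanSpace ℝ (Fin 3) | Metric.infDist p (circle3 R) ≤ r}
      = ENNReal.ofReal (2 * π ^ 2 * r ^ 2 * R) := by
  have hR : 0 < R := lt_of_lt_of_le hr hrR
  -- the set in coordinates
  set T : Set (Fin 3 → ℝ) :=
    {f | (Real.sqrt ((f 0)^2 + (f 1)^2) - R)^2 + (f 2)^2 ≤ r^2} with hT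
  set U : Set (ℝ × (Fin 2 → ℝ)) :=
    {q | (Real.sqrt ((q.2 0)^2 + (q.2 1)^2) - R)^2 + q.1^2 ≤ r^2} with hU
  have hmeasg : Measurable fun g : Fin 2 → ℝ =>
      (Real.sqrt ((g 0)^2 + (g 1)^2) - R)^2 := by
    exact (((((measurable_pi_apply 0).pow_const 2).add
      ((measurable_pi_apply 1).pow_const 2)).sqrt).sub measurable_const).pow_const 2
  have hmU : MeasurableSet U := by
    apply measurableSet_le _ measurable_const
    exact ((hmeasg.comp measurable_snd).add ((measurable_fst).pow_const 2))
  have hmT : MeasurableSet T := by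
    apply measurableSet_le _ measurable_const
    have : Measurable fun f : Fin 3 → ℝ =>
        (Real.sqrt ((f 0)^2 + (f 1)^2) - R)^2 :=
      (((((measurable_pi_apply 0).pow_const 2).add
        ((measurable_pi_apply 1).pow_const 2)).sqrt).sub measurable_const).pow_const 2
    exact this.add ((measurable_pi_apply 2).pow_const 2)
  -- step 1 : transfer to the pi type
  have hset : {p : EuclideanSpace ℝ (Fin 3) | Metric.infDist p (circle3 R) ≤ r}
      = (MeasurableEquiv.toLp 2 (Fin 3 → ℝ)).symm ⁻¹' T := by
    ext p
    simp only [Set.mem_setOf_eq, Set.mem_preimage, hT]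
    rw [dist_circle3 R hR p]
    rw [show Real.sqrt ((Real.sqrt ((p 0)^2 + (p 1)^2) - R)^2 + (p 2)^2) ≤ r
        ↔ (Real.sqrt ((p 0)^2 + (p 1)^2) - R)^2 + (p 2)^2 ≤ r^2 by
      rw [← Real.sqrt_sq hr.le, Real.sqrt_le_sqrt_iff (sq_nonneg r), Real.sqrt_sq hr.le]]
    rfl
  rw [hset,
    (EuclideanSpace.volume_preserving_symm_measurableEquiv_toLp (Fin 3)).measure_preimage
      hmT.nullMeasurableSet]
  -- step 2 : split off the last coordinate
  have hpre : (MeasurableEquiv.piFinSuccAbove (fun _ : Fin 3 => ℝ) 2) ⁻¹' U = T := by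
    ext f
    have happ : (MeasurableEquiv.piFinSuccAbove (fun _ : Fin 3 => ℝ) 2) f
        = (f 2, fun j => f ((2 : Fin 3).succAbove j)) := by
      simp [MeasurableEquiv.piFinSuccAbove, Fin.insertNthEquiv, Fin.removeNth]
      rfl
    simp only [Set.mem_preimage, happ, hU, hT, Set.mem_setOf_eq]
    rfl
  rw [← hpre, (volume_preserving_piFinSuccAbove (fun _ : Fin 3 => ℝ) 2).measure_preimage
      hmU.nullMeasurableSet]
  -- step 3 : Fubini
  rw [Measure.volume_eq_prod, Measure.prod_apply hmU]
  have hslice : ∀ z : ℝ, volume (Prod.mk z ⁻¹' U)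
      = Set.indicator (Set.Icc (-r) r)
          (fun z => ENNReal.ofReal (4 * π * R * Real.sqrt (r^2 - z^2))) z := by
    intro z
    have hpre2 : Prod.mk z ⁻¹' U
        = {g : Fin 2 → ℝ | (Real.sqrt ((g 0)^2 + (g 1)^2) - R)^2 + z^2 ≤ r^2} := rfl
    rcases le_or_gt (z^2) (r^2) with hz | hz
    · have hzmem : z ∈ Set.Icc (-r) r := by
        constructor <;> nlinarith [abs_le_abs (le_refl z), sq_abs z, neg_abs_le z, le_abs_self z]
      rw [hpre2, annulus_vol r R hr hrR z hz, Set.indicator_of_mem hzmem]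
    · have hzmem : z ∉ Set.Icc (-r) r := by
        intro hmem
        simp only [Set.mem_Icc] at hmem
        nlinarith [hmem.1, hmem.2]
      have : Prod.mk z ⁻¹' U = (∅ : Set (Fin 2 → ℝ)) := by
        rw [hpre2]
        ext g
        simp only [Set.mem_setOf_eq, Set.mem_empty_iff_false, iff_false, not_le]
        nlinarith [sq_nonneg (Real.sqrt ((g 0)^2 + (g 1)^2) - R)]
      rw [this, measure_empty, Set.indicator_of_notMem hzmem]
  simp_rw [hslice]
  exact zint r R hr hR.le
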